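/- arXiv:2102.03224 — 2 statements merged into one kernel-verified Lean document; each statement's English description precedes it below -/
import Mathlib

section
/- For any nonzero k ∈ ℝ³ and real constants c ≠ 0 and m > 0, the eigenvalues of the operator Λ(k) = (M(k)/c + c·Id)² + m·Id restricted to the subspace {v ∈ ℂ³ : k ⋅ v = 0} are (|k|/c + c)² + m and (-|k|/c + c)² + m, and both are ≥ m > 0; in particular Λ(k) is invertible on this subspace. -/
open Matrix Complex

/-- The symbol of the curl operator: `M(k) v = i (k × v)`. -/
def curlSymbol (k : Fin 3 → ℝ) : Matrix (Fin 3) (Fin 3) ℂ :=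
  !![0, -Complex.I * (k 2), Complex.I * (k 1);
     Complex.I * (k 2), 0, -Complex.I * (k 0);
     -Complex.I * (k 1), Complex.I * (k 0), 0]

/-- The Euclidean norm of `k ∈ ℝ³`. -/
noncomputable def enorm3 (k : Fin 3 → ℝ) : ℝ :=
  Real.sqrt (k 0 ^ 2 + k 1 ^ 2 + k 2 ^ 2)

/-- The symbol `Λ(k) = (M(k)/c + c·Id)² + m·Id` of the operator `Λ`. -/
noncomputable def lambdaSymbol (k : Fin 3 → ℝ) (c m : ℝ) : Matrix (Fin 3) (Fin 3) ℂ :=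
  ((c : ℂ)⁻¹ • curlSymbol k + (c : ℂ) • 1) ^ 2 + (m : ℂ) • 1

lemma curl_apply (k : Fin 3 → ℝ) (v : Fin 3 → ℂ) :
    (curlSymbol k).mulVec v =
      ![-Complex.I * (k 2) * v 1 + Complex.I * (k 1) * v 2,
        Complex.I * (k 2) * v 0 - Complex.I * (k 0) * v 2,
        -Complex.I * (k 1) * v 0 + Complex.I * (k 0) * v 1] := by
  funext i
  fin_cases i <;>
    simp [curlSymbol, Matrix.mulVec, dotProduct, Fin.sum_univ_three] <;> ring

lemma curl_dot (k : Fin 3 → ℝ) (v : Fin 3 → ℂ) :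
    (∑ i, (k i : ℂ) * ((curlSymbol k).mulVec v) i) = 0 := by
  rw [curl_apply, Fin.sum_univ_three]
  simp only [Matrix.cons_val_zero, Matrix.cons_val_one, Matrix.head_cons,
    Matrix.cons_val_two, Matrix.tail_cons]
  ring

lemma curl_sq (k : Fin 3 → ℝ) (v : Fin 3 → ℂ)
    (hv : (∑ i, (k i : ℂ) * v i) = 0) :
    (curlSymbol k).mulVec ((curlSymbol k).mulVec v) =
      (((k 0 : ℂ) ^ 2 + (k 1 : ℂ) ^ 2 + (k 2 : ℂ) ^ 2)) • v := by
  rw [Fin.sum_univ_three] at hv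
  rw [curl_apply, curl_apply]
  funext i
  fin_cases i
  · simp only [Matrix.cons_val_zero, Matrix.cons_val_one, Matrix.head_cons,
      Matrix.cons_val_two, Matrix.tail_cons, Pi.smul_apply, smul_eq_mul, Fin.zero_eta,
      Fin.mk_one, Fin.isValue, Fin.reduceFinMk]
    linear_combination (-(k 1:ℂ)^2 * v 0 - (k 2:ℂ)^2 * v 0 + (k 0:ℂ)*(k 1) * v 1
      + (k 0:ℂ)*(k 2)*v 2) * Complex.I_sq - (k 0 : ℂ) * hv
  · simp only [Matrix.cons_val_zero, Matrix.cons_val_one, Matrix.head_cons,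
      Matrix.cons_val_two, Matrix.tail_cons, Pi.smul_apply, smul_eq_mul, Fin.zero_eta,
      Fin.mk_one, Fin.isValue, Fin.reduceFinMk]
    linear_combination (-(k 0:ℂ)^2 * v 1 - (k 2:ℂ)^2 * v 1 + (k 1:ℂ)*(k 0) * v 0
      + (k 1:ℂ)*(k 2)*v 2) * Complex.I_sq - (k 1 : ℂ) * hv
  · simp only [Matrix.cons_val_zero, Matrix.cons_val_one, Matrix.head_cons,
      Matrix.cons_val_two, Matrix.tail_cons, Pi.smul_apply, smul_eq_mul, Fin.zero_eta,
      Fin.mk_one, Fin.isValue, Fin.reduceFinMk]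
    linear_combination (-(k 0:ℂ)^2 * v 2 - (k 1:ℂ)^2 * v 2 + (k 2:ℂ)*(k 0) * v 0
      + (k 2:ℂ)*(k 1)*v 1) * Complex.I_sq - (k 2 : ℂ) * hv

lemma lambda_eq (k : Fin 3 → ℝ) (c m : ℝ) (hc : c ≠ 0) :
    lambdaSymbol k c m = ((c:ℂ)⁻¹^2) • (curlSymbol k * curlSymbol k)
      + (2:ℂ) • curlSymbol k + (((c:ℂ)^2 + (m:ℂ))) • 1 := by
  have hc' : (c:ℂ) ≠ 0 := by exact_mod_cast hc
  rw [lambdaSymbol, sq]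
  rw [add_mul, mul_add, mul_add]
  rw [smul_mul_smul_comm, smul_mul_smul_comm, smul_mul_smul_comm, smul_mul_smul_comm]
  rw [inv_mul_cancel₀ hc', mul_inv_cancel₀ hc', mul_one, Matrix.one_mul, Matrix.mul_one]
  match_scalars <;> field_simp <;> ring

lemma lambda_apply (k : Fin 3 → ℝ) (c m : ℝ) (hc : c ≠ 0) (v : Fin 3 → ℂ) :
    (lambdaSymbol k c m).mulVec v =
      ((c:ℂ)⁻¹^2) • (curlSymbol k).mulVec ((curlSymbol k).mulVec v)
        + (2:ℂ) • (curlSymbol k).mulVec v + (((c:ℂ)^2 + (m:ℂ))) • v := by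
  rw [lambda_eq k c m hc]
  simp [Matrix.add_mulVec, Matrix.smul_mulVec, Matrix.one_mulVec,
    ← Matrix.mulVec_mulVec]

/-- for nonzero `k ∈ ℝ³`, `c ≠ 0`, `m > 0`, the eigenvalues of
`Λ(k) = (M(k)/c + c·Id)² + m·Id` on `{v ∈ ℂ³ : k ⋅ v = 0}` are
`(|k|/c + c)² + m` and `(-|k|/c + c)² + m`, both are `≥ m > 0`, and `Λ(k)` is
invertible on this subspace. -/
theorem lambdaSymbol_eigenvalues (k : Fin 3 → ℝ) (hk : k ≠ 0) (c m : ℝ)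
    (hc : c ≠ 0) (hm : 0 < m) :
    (∀ μ : ℂ,
      (∃ v : Fin 3 → ℂ, v ≠ 0 ∧ (∑ i, (k i : ℂ) * v i) = 0 ∧
        (lambdaSymbol k c m).mulVec v = μ • v) ↔
      (μ = (((enorm3 k / c + c) ^ 2 + m : ℝ) : ℂ) ∨
       μ = (((-(enorm3 k) / c + c) ^ 2 + m : ℝ) : ℂ))) ∧
    (m ≤ (enorm3 k / c + c) ^ 2 + m ∧ m ≤ (-(enorm3 k) / c + c) ^ 2 + m ∧ 0 < m) ∧
    (∀ w : Fin 3 → ℂ, (∑ i, (k i : ℂ) * w i) = 0 →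
      ∃ v : Fin 3 → ℂ, (∑ i, (k i : ℂ) * v i) = 0 ∧
        (lambdaSymbol k c m).mulVec v = w) ∧
    (∀ v : Fin 3 → ℂ, (∑ i, (k i : ℂ) * v i) = 0 →
      (lambdaSymbol k c m).mulVec v = 0 → v = 0) := by
  have hc' : (c : ℂ) ≠ 0 := by exact_mod_cast hc
  set K := curlSymbol k with hK
  set r := enorm3 k with hrdef
  -- positivity of the norm
  have hkcomp : k 0 ≠ 0 ∨ k 1 ≠ 0 ∨ k 2 ≠ 0 := by
    by_contra h
    push_neg at h
    exact hk (by funext i; fin_cases i <;> simp [h.1, h.2.1, h.2.2])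
  have hsum : 0 < k 0 ^ 2 + k 1 ^ 2 + k 2 ^ 2 := by
    rcases hkcomp with h | h | h <;> positivity
  have hr : 0 < r := Real.sqrt_pos.mpr hsum
  have hr2 : r ^ 2 = k 0 ^ 2 + k 1 ^ 2 + k 2 ^ 2 := Real.sq_sqrt hsum.le
  have hr2c : ((r : ℂ)) ^ 2 = (k 0 : ℂ) ^ 2 + (k 1 : ℂ) ^ 2 + (k 2 : ℂ) ^ 2 := by
    exact_mod_cast congrArg (fun x : ℝ => (x : ℂ)) hr2
  have hM2 : ∀ v : Fin 3 → ℂ, (∑ i, (k i : ℂ) * v i) = 0 →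
      K.mulVec (K.mulVec v) = ((r : ℂ) ^ 2) • v := by
    intro v hv; rw [hK, curl_sq k v hv, hr2c]
  set t : ℂ := (c : ℂ)⁻¹ ^ 2 * (r : ℂ) ^ 2 + (c : ℂ) ^ 2 + (m : ℂ) with ht
  have hL : ∀ v : Fin 3 → ℂ, (∑ i, (k i : ℂ) * v i) = 0 →
      (lambdaSymbol k c m).mulVec v = t • v + (2 : ℂ) • K.mulVec v := by
    intro v hv
    rw [lambda_apply k c m hc v, ← hK, hM2 v hv, ht]
    match_scalars <;> ring
  have hcastP : (((r / c + c) ^ 2 + m : ℝ) : ℂ) = t + 2 * r := by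
    rw [ht]; push_cast; field_simp; ring
  have hcastM : (((-r / c + c) ^ 2 + m : ℝ) : ℂ) = t - 2 * r := by
    rw [ht]; push_cast; field_simp; ring
  have hpP : t + 2 * r ≠ 0 := by
    rw [← hcastP]
    exact_mod_cast ne_of_gt (by positivity : (0:ℝ) < (r / c + c) ^ 2 + m)
  have hpM : t - 2 * r ≠ 0 := by
    rw [← hcastM]
    exact_mod_cast ne_of_gt (by positivity : (0:ℝ) < (-r / c + c) ^ 2 + m)
  -- a real vector orthogonal to k
  obtain ⟨u, hudot, huj⟩ : ∃ u : Fin 3 → ℝ,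
      (k 0 * u 0 + k 1 * u 1 + k 2 * u 2 = 0) ∧ ∃ j, u j ≠ 0 := by
    by_cases h12 : k 1 = 0 ∧ k 2 = 0
    · have hk0 : k 0 ≠ 0 := by rcases hkcomp with h | h | h; exacts [h, absurd h12.1 h, absurd h12.2 h]
      exact ⟨![0, 0, k 0], by simp [h12.2], 2, by simpa using hk0⟩
    · rcases not_and_or.mp h12 with h | h
      · exact ⟨![0, k 2, -(k 1)], by simp; ring, 2, by simpa using h⟩
      · exact ⟨![0, k 2, -(k 1)], by simp; ring, 1, by simpa using h⟩
  obtain ⟨j, hj⟩ := huj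
  set uc : Fin 3 → ℂ := fun i => ((u i : ℝ) : ℂ) with huc
  have hucdot : (∑ i, (k i : ℂ) * uc i) = 0 := by
    rw [Fin.sum_univ_three, huc]
    push_cast
    exact_mod_cast congrArg (fun x : ℝ => (x : ℂ)) hudot
  have hKuc_im : ∀ i, ((K.mulVec uc) i).re = 0 := by
    intro i
    rw [hK, curl_apply]
    fin_cases i <;> simp [huc]
  -- eigenvector construction for eigenvalue σ * r of K
  have hEvec : ∀ σ : ℝ, σ ^ 2 = 1 → ∃ v : Fin 3 → ℂ, v ≠ 0 ∧
      (∑ i, (k i : ℂ) * v i) = 0 ∧ K.mulVec v = ((σ * r : ℝ) : ℂ) • v := by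
    intro σ hσ
    refine ⟨K.mulVec uc + ((σ * r : ℝ) : ℂ) • uc, ?_, ?_, ?_⟩
    · intro h0
      have h := congrFun h0 j
      simp only [Pi.add_apply, Pi.smul_apply, smul_eq_mul, Pi.zero_apply] at h
      have hre := congrArg Complex.re h
      simp only [Complex.add_re, Complex.mul_re, Complex.ofReal_re, Complex.ofReal_im,
        Complex.zero_re, hKuc_im j, huc] at hre
      have hσ0 : σ ≠ 0 := by intro h; rw [h] at hσ; norm_num at hσ
      have : σ * r * u j = 0 := by have := hKuc_im j; simp only [huc] at this; linarith
      exact hj (by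
        have := mul_eq_zero.mp this
        rcases this with h' | h'
        · exact absurd h' (mul_ne_zero hσ0 hr.ne')
        · exact h')
    · rw [Fin.sum_univ_three] at hucdot ⊢
      have hcd := curl_dot k uc
      rw [Fin.sum_univ_three] at hcd
      simp only [Pi.add_apply, Pi.smul_apply, smul_eq_mul]
      rw [← hK] at hcd
      linear_combination hcd + ((σ * r : ℝ) : ℂ) * hucdot
    · rw [Matrix.mulVec_add, Matrix.mulVec_smul, hM2 uc hucdot]
      have hσc2 : ((σ : ℂ)) ^ 2 = 1 := by
        exact_mod_cast congrArg (fun x : ℝ => (x : ℂ)) hσ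
      match_scalars
      · push_cast
        linear_combination -(r : ℂ) ^ 2 * hσc2
      · push_cast
        ring
  constructor
  · -- eigenvalue characterization
    intro μ
    constructor
    · rintro ⟨v, hv0, hv, hΛ⟩
      have heq : t • v + (2 : ℂ) • K.mulVec v = μ • v := (hL v hv).symm.trans hΛ
      have hKv : K.mulVec v = ((μ - t) / 2) • v := by
        funext i
        have h := congrFun heq i
        simp only [Pi.add_apply, Pi.smul_apply, smul_eq_mul] at h ⊢
        linear_combination h / 2
      have hKKv : K.mulVec (K.mulVec v) = (((μ - t) / 2) ^ 2) • v := by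
        rw [hKv, Matrix.mulVec_smul, hKv, smul_smul, ← sq]
      obtain ⟨i, hvi⟩ : ∃ i, v i ≠ 0 := by
        by_contra h
        push_neg at h
        exact hv0 (funext fun i => h i)
      have hs2 : ((μ - t) / 2) ^ 2 = (r : ℂ) ^ 2 := by
        have h := congrFun (hKKv.symm.trans (hM2 v hv)) i
        simp only [Pi.smul_apply, smul_eq_mul] at h
        exact mul_right_cancel₀ hvi h
      have hfac : ((μ - t) / 2 - r) * ((μ - t) / 2 + r) = 0 := by
        linear_combination hs2
      rcases mul_eq_zero.mp hfac with h | h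
      · left; rw [hcastP]; linear_combination 2 * h
      · right; rw [hcastM]; linear_combination 2 * h
    · rintro (hμ | hμ)
      · obtain ⟨v, hv0, hv, hKv⟩ := hEvec 1 (by norm_num)
        refine ⟨v, hv0, hv, ?_⟩
        rw [hL v hv, hKv, hμ, hcastP]
        match_scalars
        push_cast
        ring
      · obtain ⟨v, hv0, hv, hKv⟩ := hEvec (-1) (by norm_num)
        refine ⟨v, hv0, hv, ?_⟩
        rw [hL v hv, hKv, hμ, hcastM]
        match_scalars
        push_cast
        ring
  refine ⟨⟨by nlinarith [sq_nonneg (r / c + c)], by nlinarith [sq_nonneg (-r / c + c)], hm⟩, ?_, ?_⟩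
  · -- surjectivity
    intro w hw
    have hd : t ^ 2 - 4 * (r : ℂ) ^ 2 ≠ 0 := by
      intro h
      have : (t - 2 * r) * (t + 2 * r) = 0 := by linear_combination h
      rcases mul_eq_zero.mp this with h' | h'
      exacts [hpM h', hpP h']
    set d : ℂ := t ^ 2 - 4 * (r : ℂ) ^ 2 with hdd
    refine ⟨d⁻¹ • (t • w - (2 : ℂ) • K.mulVec w), ?_, ?_⟩
    · have hcd := curl_dot k w
      rw [← hK] at hcd
      rw [Fin.sum_univ_three] at hw hcd ⊢
      simp only [Pi.smul_apply, Pi.sub_apply, smul_eq_mul]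
      linear_combination d⁻¹ * t * hw - 2 * d⁻¹ * hcd
    · have hvdot : (∑ i, (k i : ℂ) * (d⁻¹ • (t • w - (2 : ℂ) • K.mulVec w)) i) = 0 := by
        have hcd := curl_dot k w
        rw [← hK] at hcd
        rw [Fin.sum_univ_three] at hw hcd ⊢
        simp only [Pi.smul_apply, Pi.sub_apply, smul_eq_mul]
        linear_combination d⁻¹ * t * hw - 2 * d⁻¹ * hcd
      rw [hL _ hvdot]
      rw [Matrix.mulVec_smul, Matrix.mulVec_sub, Matrix.mulVec_smul, Matrix.mulVec_smul,
        hM2 w hw]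
      match_scalars <;> field_simp <;> ring
  · -- injectivity
    intro v hv hΛ
    have heq : t • v + (2 : ℂ) • K.mulVec v = 0 := (hL v hv).symm.trans hΛ
    have hKv : K.mulVec v = (-(t / 2)) • v := by
      funext i
      have h := congrFun heq i
      simp only [Pi.add_apply, Pi.smul_apply, smul_eq_mul, Pi.zero_apply] at h ⊢
      linear_combination h / 2
    have hKKv : K.mulVec (K.mulVec v) = ((t / 2) ^ 2) • v := by
      rw [hKv, Matrix.mulVec_smul, hKv, smul_smul]
      congr 1
      ring
    have hd : t ^ 2 - 4 * (r : ℂ) ^ 2 ≠ 0 := by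
      intro h
      have : (t - 2 * r) * (t + 2 * r) = 0 := by linear_combination h
      rcases mul_eq_zero.mp this with h' | h'
      exacts [hpM h', hpP h']
    funext i
    have h := congrFun (hKKv.symm.trans (hM2 v hv)) i
    simp only [Pi.smul_apply, smul_eq_mul] at h
    have h4 : (t ^ 2 - 4 * (r : ℂ) ^ 2) * v i = 0 := by linear_combination 4 * h
    simpa using (mul_eq_zero.mp h4).resolve_left hd
end

section
/- Let Λ be a bounded positive self-adjoint operator with bounded inverse on a real inner product space V. Then the function C : V → ℝ defined by C(ξ) = exp(-½⟨Λ⁻¹ξ, ξ⟩) is positive definite: for any ξ₁,…,ξₙ ∈ V and complex numbers α₁,…,αₙ, one has Σᵢⱼ αᵢ·conj(αⱼ)·C(ξᵢ - ξⱼ) ≥ 0. -/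
open scoped InnerProductSpace ComplexConjugate

open Finset Matrix

/-- `(∑ a, g a) ^ k` expands as a sum over tuples. -/
private lemma aux_sum_pow {n k : ℕ} (g : Fin n → ℝ) :
    (∑ a, g a) ^ k = ∑ p : Fin k → Fin n, ∏ l, g (p l) := by
  have h1 : (∑ a, g a) ^ k = ∏ _l : Fin k, (∑ a, g a) := by
    simp [Finset.prod_const]
  rw [h1, Finset.prod_univ_sum]
  rw [Fintype.piFinset_univ]

/-- Entrywise powers of a PSD matrix give nonnegative quadratic forms. -/
private lemma aux_pow {n : ℕ} {M : Matrix (Fin n) (Fin n) ℝ} (hM : M.PosSemidef)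
    (d : Fin n → ℝ) (k : ℕ) :
    0 ≤ ∑ i, ∑ j, d i * d j * M i j ^ k := by
  classical
  obtain ⟨S, hSS, hSherm⟩ : ∃ S : Matrix (Fin n) (Fin n) ℝ, S * S = M ∧ S.IsHermitian :=
    by open scoped MatrixOrder in exact ⟨CFC.sqrt M, CFC.sqrt_mul_sqrt_self M hM.nonneg,
      (CFC.sqrt_nonneg M).posSemidef.isHermitian⟩
  have hSsym : ∀ i j, S i j = S j i := by
    intro i j
    have h := hSherm.apply j i
    rw [star_trivial] at h
    exact h
  have hMij : ∀ i j, M i j = ∑ a, S i a * S j a := by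
    intro i j
    rw [← hSS, Matrix.mul_apply]
    exact Finset.sum_congr rfl fun a _ => by rw [hSsym a j]
  set f : Fin n → (Fin k → Fin n) → ℝ := fun i p => d i * ∏ l, S i (p l) with hf
  have key : ∀ i j, d i * d j * M i j ^ k = ∑ p : Fin k → Fin n, f i p * f j p := by
    intro i j
    rw [hMij, aux_sum_pow]
    rw [Finset.mul_sum]
    refine Finset.sum_congr rfl fun p _ => ?_
    simp only [hf]
    rw [Finset.prod_mul_distrib]
    ring
  calc ∑ i, ∑ j, d i * d j * M i j ^ k
      = ∑ i, ∑ j, ∑ p : Fin k → Fin n, f i p * f j p :=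
        Finset.sum_congr rfl fun i _ => Finset.sum_congr rfl fun j _ => key i j
    _ = ∑ i, ∑ p : Fin k → Fin n, ∑ j, f i p * f j p :=
        Finset.sum_congr rfl fun i _ => Finset.sum_comm
    _ = ∑ p : Fin k → Fin n, ∑ i, ∑ j, f i p * f j p := Finset.sum_comm
    _ = ∑ p : Fin k → Fin n, (∑ i, f i p) ^ 2 := by
        refine Finset.sum_congr rfl fun p _ => ?_
        rw [sq, Finset.sum_mul_sum]
    _ ≥ 0 := Finset.sum_nonneg fun p _ => sq_nonneg _

/-- Entrywise exponential of a PSD matrix gives nonnegative quadratic forms. -/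
private lemma aux_exp {n : ℕ} {M : Matrix (Fin n) (Fin n) ℝ} (hM : M.PosSemidef)
    (d : Fin n → ℝ) :
    0 ≤ ∑ i, ∑ j, d i * d j * Real.exp (M i j) := by
  have hexp : ∀ x : ℝ, Real.exp x = ∑' k : ℕ, x ^ k / (k.factorial : ℝ) := by
    intro x
    rw [Real.exp_eq_exp_ℝ, NormedSpace.exp_eq_tsum_div]
  have hsum : ∀ q : Fin n × Fin n,
      Summable (fun k : ℕ => d q.1 * d q.2 * (M q.1 q.2 ^ k / (k.factorial : ℝ))) := by
    intro q
    exact (Real.summable_pow_div_factorial _).mul_left _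
  have h1 : ∑ i, ∑ j, d i * d j * Real.exp (M i j)
      = ∑ q : Fin n × Fin n, ∑' k : ℕ, d q.1 * d q.2 * (M q.1 q.2 ^ k / (k.factorial : ℝ)) := by
    rw [Fintype.sum_prod_type]
    refine Finset.sum_congr rfl fun i _ => Finset.sum_congr rfl fun j _ => ?_
    rw [hexp, ← tsum_mul_left]
  rw [h1, ← Summable.tsum_finsetSum (fun q _ => hsum q)]
  refine tsum_nonneg fun k => ?_
  have h2 : ∑ q : Fin n × Fin n, d q.1 * d q.2 * (M q.1 q.2 ^ k / (k.factorial : ℝ))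
      = (∑ i, ∑ j, d i * d j * M i j ^ k) / (k.factorial : ℝ) := by
    rw [Finset.sum_div, Fintype.sum_prod_type]
    refine Finset.sum_congr rfl fun i _ => ?_
    rw [Finset.sum_div]
    exact Finset.sum_congr rfl fun j _ => by ring
  rw [h2]
  have := aux_pow hM d k
  positivity

/-- if `Λ` is a bounded positive self-adjoint operator with
bounded inverse `Λinv` on a real inner product space `V`, then
`C(ξ) = exp(-½⟨Λ⁻¹ξ, ξ⟩)` is positive definite: for any `ξ₁, …, ξₙ ∈ V` and
`α₁, …, αₙ ∈ ℂ` we have `Σᵢⱼ αᵢ conj(αⱼ) C(ξᵢ - ξⱼ) ≥ 0` (the sum is a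
nonnegative real number). -/
theorem gaussian_characteristic_positive_definite
    {V : Type*} [NormedAddCommGroup V] [InnerProductSpace ℝ V]
    (Λ Λinv : V →L[ℝ] V)
    (hsym : ∀ x y : V, ⟪Λ x, y⟫_ℝ = ⟪x, Λ y⟫_ℝ)
    (m : ℝ) (hm : 0 < m)
    (hpos : ∀ x : V, m * ‖x‖ ^ 2 ≤ ⟪Λ x, x⟫_ℝ)
    (hinv₁ : Λ.comp Λinv = ContinuousLinearMap.id ℝ V)
    (hinv₂ : Λinv.comp Λ = ContinuousLinearMap.id ℝ V) :
    ∀ (n : ℕ) (ξ : Fin n → V) (α : Fin n → ℂ),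
      ∃ r : ℝ, 0 ≤ r ∧
        (∑ i, ∑ j, α i * conj (α j) *
          (Real.exp (-(1 / 2) * ⟪Λinv (ξ i - ξ j), ξ i - ξ j⟫_ℝ) : ℝ)) = (r : ℂ) := by
  intro n ξ α
  have hLi : ∀ x : V, Λ (Λinv x) = x := fun x =>
    congrFun (congrArg DFunLike.coe hinv₁) x
  have hBsymm : ∀ x y : V, ⟪Λinv x, y⟫_ℝ = ⟪Λinv y, x⟫_ℝ := by
    intro x y
    calc ⟪Λinv x, y⟫_ℝ = ⟪Λinv x, Λ (Λinv y)⟫_ℝ := by rw [hLi]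
      _ = ⟪Λ (Λinv x), Λinv y⟫_ℝ := (hsym _ _).symm
      _ = ⟪x, Λinv y⟫_ℝ := by rw [hLi]
      _ = ⟪Λinv y, x⟫_ℝ := real_inner_comm _ _
  have hBpos : ∀ x : V, 0 ≤ ⟪Λinv x, x⟫_ℝ := by
    intro x
    have h1 := hpos (Λinv x)
    have h2 : ⟪Λ (Λinv x), Λinv x⟫_ℝ = ⟪Λinv x, x⟫_ℝ := by
      rw [real_inner_comm, ← hsym, hLi, real_inner_comm]
    nlinarith [norm_nonneg (Λinv x), sq_nonneg ‖Λinv x‖]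
  set M : Matrix (Fin n) (Fin n) ℝ := Matrix.of fun i j => ⟪Λinv (ξ i), ξ j⟫_ℝ with hMdef
  have hMapp : ∀ i j, M i j = ⟪Λinv (ξ i), ξ j⟫_ℝ := fun i j => rfl
  have hMsymm : ∀ i j, M i j = M j i := fun i j => hBsymm _ _
  have hMpsd : M.PosSemidef := by
    refine Matrix.PosSemidef.of_dotProduct_mulVec_nonneg ?_ ?_
    · ext i j
      simp only [Matrix.conjTranspose_apply, star_trivial]
      exact hMsymm j i
    · intro x
      have hw : dotProduct (star x) (M *ᵥ x) = ⟪Λinv (∑ i, x i • ξ i), ∑ i, x i • ξ i⟫_ℝ := by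
        simp only [map_sum, ContinuousLinearMap.map_smul, sum_inner, inner_sum,
          real_inner_smul_left, real_inner_smul_right, dotProduct, Matrix.mulVec,
          star_trivial, Finset.mul_sum]
        refine Finset.sum_congr rfl fun i _ => Finset.sum_congr rfl fun j _ => ?_
        rw [hMapp i j, hBsymm (ξ i) (ξ j)]
        ring
      rw [hw]
      exact hBpos _
  have hQ : ∀ i j, ⟪Λinv (ξ i - ξ j), ξ i - ξ j⟫_ℝ = M i i - 2 * M i j + M j j := by
    intro i j
    have h := hBsymm (ξ j) (ξ i)
    simp only [map_sub, inner_sub_left, inner_sub_right]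
    rw [h]
    simp only [hMapp]
    ring
  set e : Fin n → ℝ := fun i => Real.exp (-(1 / 2) * M i i) with he
  have hKfact : ∀ i j, Real.exp (-(1 / 2) * ⟪Λinv (ξ i - ξ j), ξ i - ξ j⟫_ℝ)
      = e i * e j * Real.exp (M i j) := by
    intro i j
    rw [hQ i j, he]
    rw [← Real.exp_add, ← Real.exp_add]
    congr 1
    ring
  have hreal : ∀ c : Fin n → ℝ,
      0 ≤ ∑ i, ∑ j, c i * c j * Real.exp (-(1 / 2) * ⟪Λinv (ξ i - ξ j), ξ i - ξ j⟫_ℝ) := by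
    intro c
    have h1 : ∑ i, ∑ j, c i * c j * Real.exp (-(1 / 2) * ⟪Λinv (ξ i - ξ j), ξ i - ξ j⟫_ℝ)
        = ∑ i, ∑ j, (c i * e i) * (c j * e j) * Real.exp (M i j) := by
      refine Finset.sum_congr rfl fun i _ => Finset.sum_congr rfl fun j _ => ?_
      rw [hKfact]
      ring
    rw [h1]
    exact aux_exp hMpsd (fun i => c i * e i)
  set K : Fin n → Fin n → ℝ :=
    fun i j => Real.exp (-(1 / 2) * ⟪Λinv (ξ i - ξ j), ξ i - ξ j⟫_ℝ) with hKdef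
  have hKsymm : ∀ i j, K i j = K j i := by
    intro i j
    simp only [hKdef]
    rw [hQ i j, hQ j i, hMsymm j i]
    congr 1
    ring
  set a : Fin n → ℝ := fun i => (α i).re with ha
  set b : Fin n → ℝ := fun i => (α i).im with hb
  refine ⟨∑ i, ∑ j, (a i * a j + b i * b j) * K i j, ?_, ?_⟩
  · have hsplit : ∑ i, ∑ j, (a i * a j + b i * b j) * K i j
        = (∑ i, ∑ j, a i * a j * K i j) + ∑ i, ∑ j, b i * b j * K i j := by
      rw [← Finset.sum_add_distrib]
      refine Finset.sum_congr rfl fun i _ => ?_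
      rw [← Finset.sum_add_distrib]
      exact Finset.sum_congr rfl fun j _ => by ring
    rw [hsplit]
    exact add_nonneg (hreal a) (hreal b)
  · have hterm : ∀ i j, α i * conj (α j) * ((K i j : ℝ) : ℂ)
        = (((a i * a j + b i * b j) * K i j : ℝ) : ℂ)
          + (((b i * a j - a i * b j) * K i j : ℝ) : ℂ) * Complex.I := by
      intro i j
      apply Complex.ext <;>
        simp only [Complex.add_re, Complex.add_im, Complex.mul_re, Complex.mul_im,
          Complex.ofReal_re, Complex.ofReal_im, Complex.I_re, Complex.I_im,
          Complex.conj_re, Complex.conj_im, Complex.ofReal_mul, Complex.ofReal_add,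
          Complex.sub_re, Complex.sub_im,
          Complex.ofReal_sub, ha, hb] <;> ring
    have himzero : ∑ i, ∑ j, (b i * a j - a i * b j) * K i j = 0 := by
      set T := ∑ i, ∑ j, (b i * a j - a i * b j) * K i j with hT
      have h2 : T = -T := by
        calc T = ∑ i, ∑ j, -((b j * a i - a j * b i) * K j i) := by
              refine Finset.sum_congr rfl fun i _ => Finset.sum_congr rfl fun j _ => ?_
              rw [hKsymm i j]; ring
          _ = -∑ i, ∑ j, (b j * a i - a j * b i) * K j i := by
              simp [Finset.sum_neg_distrib]
          _ = -∑ j, ∑ i, (b j * a i - a j * b i) * K j i := by rw [Finset.sum_comm]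
          _ = -T := rfl
      linarith
    calc ∑ i, ∑ j, α i * conj (α j) * ((K i j : ℝ) : ℂ)
        = ∑ i, ∑ j, ((((a i * a j + b i * b j) * K i j : ℝ) : ℂ)
            + (((b i * a j - a i * b j) * K i j : ℝ) : ℂ) * Complex.I) :=
          Finset.sum_congr rfl fun i _ => Finset.sum_congr rfl fun j _ => hterm i j
      _ = ((∑ i, ∑ j, (a i * a j + b i * b j) * K i j : ℝ) : ℂ)
            + ((∑ i, ∑ j, (b i * a j - a i * b j) * K i j : ℝ) : ℂ) * Complex.I := by
          push_cast
          simp only [Finset.sum_add_distrib, ← Finset.sum_mul]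
      _ = ((∑ i, ∑ j, (a i * a j + b i * b j) * K i j : ℝ) : ℂ) := by
          rw [himzero]
          simp
end
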